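/- (Vorticity equation.) Let v, z : ℝ³ × ℝ → ℝ³ be twice continuously differentiable time-dependent vector fields with curl z(x,t) = curl v(x,t) for all (x,t) and div v(x,t) = 0 for all (x,t), and suppose z satisfies the impulse equation ∂z/∂t + Dz·v + (Dv)ᵀ·z = 0 everywhere. Set w := curl v. Then w satisfies the vorticity equation ∂w/∂t(x,t) + Dw(x,t) v(x,t) − Dv(x,t) w(x,t) = 0 for all (x,t), i.e. ∂w/∂t + [v, w] = 0 where [v,w] = (v·∇)w − (w·∇)v is the Lie bracket of vector fields. -/

import Mathlib

open Matrix

/-- The Jacobian matrix of a vector field `u : ℝ³ → ℝ³` at `x`: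
`(jacAt u x) i j = ∂uᵢ/∂xⱼ (x)`. -/
noncomputable def jacAt (u : (Fin 3 → ℝ) → (Fin 3 → ℝ)) (x : Fin 3 → ℝ) :
    Matrix (Fin 3) (Fin 3) ℝ :=
  fun i j => fderiv ℝ u x (Pi.single j 1) i

/-- The gradient of a scalar function `f : ℝ³ → ℝ` at `x`. -/
noncomputable def gradAt (f : (Fin 3 → ℝ) → ℝ) (x : Fin 3 → ℝ) : Fin 3 → ℝ :=
  fun i => fderiv ℝ f x (Pi.single i 1)

/-- The curl of a vector field `u : ℝ³ → ℝ³` at `x`. -/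
noncomputable def curlAt (u : (Fin 3 → ℝ) → (Fin 3 → ℝ)) (x : Fin 3 → ℝ) : Fin 3 → ℝ :=
  ![jacAt u x 2 1 - jacAt u x 1 2,
    jacAt u x 0 2 - jacAt u x 2 0,
    jacAt u x 1 0 - jacAt u x 0 1]

/-- The divergence of a vector field `u : ℝ³ → ℝ³` at `x`. -/
noncomputable def divAt (u : (Fin 3 → ℝ) → (Fin 3 → ℝ)) (x : Fin 3 → ℝ) : ℝ :=
  ∑ i, jacAt u x i i

/-! ### Auxiliary machinery -/

abbrev E3 : Type := (Fin 3 → ℝ) × ℝ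

/-- spatial direction -/
noncomputable def eS (j : Fin 3) : E3 := (Pi.single j 1, 0)
/-- time direction -/
noncomputable def eT : E3 := (0, 1)

/-- second derivative shorthand -/
noncomputable def D2 (f : E3 → ℝ) (p : E3) (a b : E3) : ℝ :=
  fderiv ℝ (fderiv ℝ f) p a b

lemma hasFDerivAt_incl (x : Fin 3 → ℝ) (t : ℝ) :
    HasFDerivAt (fun y : Fin 3 → ℝ => ((y, t) : E3))
      (ContinuousLinearMap.inl ℝ (Fin 3 → ℝ) ℝ) x :=
  (hasFDerivAt_id x).prodMk (hasFDerivAt_const t x)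

lemma hasDerivAt_incl (x : Fin 3 → ℝ) (t : ℝ) :
    HasDerivAt (fun s : ℝ => ((x, s) : E3)) ((0, 1) : E3) t :=
  (hasDerivAt_const t x).prodMk (hasDerivAt_id t)

/-- jac entry of a slice as fderiv of scalar component on product space -/
lemma jac_slice (u : E3 → (Fin 3 → ℝ)) (hu : ContDiff ℝ 2 u) (x : Fin 3 → ℝ) (t : ℝ)
    (i j : Fin 3) :
    jacAt (fun y => u (y, t)) x i j = fderiv ℝ (fun p => u p i) (x, t) (eS j) := by
  have h1 : HasFDerivAt (fun y => u (y, t))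
      ((fderiv ℝ u (x, t)).comp (ContinuousLinearMap.inl ℝ (Fin 3 → ℝ) ℝ)) x :=
    ((hu.differentiable two_ne_zero) (x, t)).hasFDerivAt.comp x (hasFDerivAt_incl x t)
  have h2 : fderiv ℝ u (x, t) = ContinuousLinearMap.pi fun i => fderiv ℝ (fun p => u p i) (x, t) :=
    fderiv_pi fun i => ((contDiff_pi.mp hu i).differentiable two_ne_zero) (x, t)
  rw [jacAt, h1.fderiv]
  simp [h2, eS]

/-- time derivative of a slice, componentwise -/
lemma deriv_slice (u : E3 → (Fin 3 → ℝ)) (hu : ContDiff ℝ 2 u) (x : Fin 3 → ℝ) (t : ℝ)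
    (i : Fin 3) :
    deriv (fun s => u (x, s)) t i = fderiv ℝ (fun p => u p i) (x, t) eT := by
  have h1 : HasDerivAt (fun s => u (x, s)) (fderiv ℝ u (x, t) eT) t :=
    ((hu.differentiable two_ne_zero) (x, t)).hasFDerivAt.comp_hasDerivAt t (hasDerivAt_incl x t)
  have h2 : fderiv ℝ u (x, t) = ContinuousLinearMap.pi fun i => fderiv ℝ (fun p => u p i) (x, t) :=
    fderiv_pi fun i => ((contDiff_pi.mp hu i).differentiable two_ne_zero) (x, t)
  rw [h1.deriv, h2]
  rfl

lemma hasFDerivAt_pd (f : E3 → ℝ) (hf : ContDiff ℝ 2 f) (p : E3) (b : E3) :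
    HasFDerivAt (fun q => fderiv ℝ f q b)
      ((ContinuousLinearMap.apply ℝ ℝ b).comp (fderiv ℝ (fderiv ℝ f) p)) p := by
  have h1 : ContDiff ℝ 1 (fderiv ℝ f) := hf.fderiv_right (by norm_num)
  exact ((ContinuousLinearMap.apply ℝ ℝ b).hasFDerivAt).comp p
    ((h1.differentiable one_ne_zero) p).hasFDerivAt

lemma D2_symm (f : E3 → ℝ) (hf : ContDiff ℝ 2 f) (p : E3) (a b : E3) :
    D2 f p a b = D2 f p b a :=
  (hf.contDiffAt.isSymmSndFDerivAt (by simp)) a b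

/-- derivative in time of a spatial partial -/
lemma hasDerivAt_pd_time (f : E3 → ℝ) (hf : ContDiff ℝ 2 f) (x : Fin 3 → ℝ) (t : ℝ) (b : E3) :
    HasDerivAt (fun s => fderiv ℝ f (x, s) b) (D2 f (x, t) eT b) t :=
  (hasFDerivAt_pd f hf (x, t) b).comp_hasDerivAt t (hasDerivAt_incl x t)

/-- spatial derivative of a partial -/
lemma hasFDerivAt_pd_space (f : E3 → ℝ) (hf : ContDiff ℝ 2 f) (x : Fin 3 → ℝ) (t : ℝ) (b : E3) :
    HasFDerivAt (fun y => fderiv ℝ f (y, t) b)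
      (((ContinuousLinearMap.apply ℝ ℝ b).comp (fderiv ℝ (fderiv ℝ f) (x, t))).comp
        (ContinuousLinearMap.inl ℝ (Fin 3 → ℝ) ℝ)) x :=
  by exact (hasFDerivAt_pd f hf (x, t) b).comp x (hasFDerivAt_incl x t)

lemma jac_pi (F : (Fin 3 → ℝ) → (Fin 3 → ℝ)) (x : Fin 3 → ℝ)
    (hF : ∀ i, DifferentiableAt ℝ (fun y => F y i) x) (i j : Fin 3) :
    jacAt F x i j = fderiv ℝ (fun y => F y i) x (Pi.single j 1) := by
  have h : fderiv ℝ F x = ContinuousLinearMap.pi fun i => fderiv ℝ (fun y => F y i) x :=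
    fderiv_pi hF
  rw [jacAt, h]
  rfl
set_option maxHeartbeats 2000000

theorem vorticity_equation
    (v z : (Fin 3 → ℝ) × ℝ → (Fin 3 → ℝ))
    (hv : ContDiff ℝ 2 v) (hz : ContDiff ℝ 2 z)
    (hcurl : ∀ (x : Fin 3 → ℝ) (t : ℝ),
      curlAt (fun y => z (y, t)) x = curlAt (fun y => v (y, t)) x)
    (hdiv : ∀ (x : Fin 3 → ℝ) (t : ℝ), divAt (fun y => v (y, t)) x = 0)
    (himp : ∀ (x : Fin 3 → ℝ) (t : ℝ),
      deriv (fun s => z (x, s)) t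
        + jacAt (fun y => z (y, t)) x *ᵥ v (x, t)
        + (jacAt (fun y => v (y, t)) x)ᵀ *ᵥ z (x, t) = 0)
    (w : (Fin 3 → ℝ) × ℝ → (Fin 3 → ℝ))
    (hw : ∀ (x : Fin 3 → ℝ) (t : ℝ), w (x, t) = curlAt (fun y => v (y, t)) x) :
    ∀ (x : Fin 3 → ℝ) (t : ℝ),
      deriv (fun s => w (x, s)) t
        + jacAt (fun y => w (y, t)) x *ᵥ v (x, t)
        - jacAt (fun y => v (y, t)) x *ᵥ w (x, t) = 0 := by
  have hzC : ∀ i : Fin 3, ContDiff ℝ 2 (fun p : E3 => z p i) := fun i => contDiff_pi.mp hz i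
  have hvC : ∀ i : Fin 3, ContDiff ℝ 2 (fun p : E3 => v p i) := fun i => contDiff_pi.mp hv i
  -- scalar form of the impulse equation
  have himpS : ∀ (x : Fin 3 → ℝ) (t : ℝ) (i : Fin 3),
      fderiv ℝ (fun p : E3 => z p i) (x, t) eT
        + (fderiv ℝ (fun p : E3 => z p i) (x, t) (eS 0) * v (x, t) 0
          + fderiv ℝ (fun p : E3 => z p i) (x, t) (eS 1) * v (x, t) 1
          + fderiv ℝ (fun p : E3 => z p i) (x, t) (eS 2) * v (x, t) 2)
        + (fderiv ℝ (fun p : E3 => v p 0) (x, t) (eS i) * z (x, t) 0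
          + fderiv ℝ (fun p : E3 => v p 1) (x, t) (eS i) * z (x, t) 1
          + fderiv ℝ (fun p : E3 => v p 2) (x, t) (eS i) * z (x, t) 2) = 0 := by
    intro x t i
    have h := congrFun (himp x t) i
    simp only [Pi.add_apply, Pi.zero_apply, Matrix.mulVec, dotProduct,
      Matrix.transpose_apply, Fin.sum_univ_three, jac_slice z hz, jac_slice v hv,
      deriv_slice z hz] at h
    linarith [h]
  -- differentiated impulse equation
  have hVd : ∀ (j : Fin 3) (q : E3), HasFDerivAt (fun p : E3 => v p j)
      (fderiv ℝ (fun p : E3 => v p j) q) q :=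
    fun j q => (((hvC j).differentiable two_ne_zero) q).hasFDerivAt
  have hZd : ∀ (j : Fin 3) (q : E3), HasFDerivAt (fun p : E3 => z p j)
      (fderiv ℝ (fun p : E3 => z p j) q) q :=
    fun j q => (((hzC j).differentiable two_ne_zero) q).hasFDerivAt
  have hG : ∀ (i : Fin 3) (p : E3) (e : E3),
      D2 (fun p : E3 => z p i) p e eT
        + (fderiv ℝ (fun p : E3 => z p i) p (eS 0) * fderiv ℝ (fun p : E3 => v p 0) p e
            + v p 0 * D2 (fun p : E3 => z p i) p e (eS 0)
          + (fderiv ℝ (fun p : E3 => z p i) p (eS 1) * fderiv ℝ (fun p : E3 => v p 1) p e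
            + v p 1 * D2 (fun p : E3 => z p i) p e (eS 1))
          + (fderiv ℝ (fun p : E3 => z p i) p (eS 2) * fderiv ℝ (fun p : E3 => v p 2) p e
            + v p 2 * D2 (fun p : E3 => z p i) p e (eS 2)))
        + (fderiv ℝ (fun p : E3 => v p 0) p (eS i) * fderiv ℝ (fun p : E3 => z p 0) p e
            + z p 0 * D2 (fun p : E3 => v p 0) p e (eS i)
          + (fderiv ℝ (fun p : E3 => v p 1) p (eS i) * fderiv ℝ (fun p : E3 => z p 1) p e
            + z p 1 * D2 (fun p : E3 => v p 1) p e (eS i))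
          + (fderiv ℝ (fun p : E3 => v p 2) p (eS i) * fderiv ℝ (fun p : E3 => z p 2) p e
            + z p 2 * D2 (fun p : E3 => v p 2) p e (eS i))) = 0 := by
    intro i p e
    have hf := ((hasFDerivAt_pd _ (hzC i) p eT).add
        ((((hasFDerivAt_pd _ (hzC i) p (eS 0)).mul (hVd 0 p)).add
          ((hasFDerivAt_pd _ (hzC i) p (eS 1)).mul (hVd 1 p))).add
          ((hasFDerivAt_pd _ (hzC i) p (eS 2)).mul (hVd 2 p)))).add
        ((((hasFDerivAt_pd _ (hvC 0) p (eS i)).mul (hZd 0 p)).add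
          ((hasFDerivAt_pd _ (hvC 1) p (eS i)).mul (hZd 1 p))).add
          ((hasFDerivAt_pd _ (hvC 2) p (eS i)).mul (hZd 2 p)))
    have hfun : (fun q : E3 =>
        fderiv ℝ (fun p : E3 => z p i) q eT
          + (fderiv ℝ (fun p : E3 => z p i) q (eS 0) * v q 0
            + fderiv ℝ (fun p : E3 => z p i) q (eS 1) * v q 1
            + fderiv ℝ (fun p : E3 => z p i) q (eS 2) * v q 2)
          + (fderiv ℝ (fun p : E3 => v p 0) q (eS i) * z q 0
            + fderiv ℝ (fun p : E3 => v p 1) q (eS i) * z q 1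
            + fderiv ℝ (fun p : E3 => v p 2) q (eS i) * z q 2)) = fun _ => (0:ℝ) :=
      funext fun q => himpS q.1 q.2 i
    have hf0 : HasFDerivAt (fun q : E3 =>
        fderiv ℝ (fun p : E3 => z p i) q eT
          + (fderiv ℝ (fun p : E3 => z p i) q (eS 0) * v q 0
            + fderiv ℝ (fun p : E3 => z p i) q (eS 1) * v q 1
            + fderiv ℝ (fun p : E3 => z p i) q (eS 2) * v q 2)
          + (fderiv ℝ (fun p : E3 => v p 0) q (eS i) * z q 0
            + fderiv ℝ (fun p : E3 => v p 1) q (eS i) * z q 1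
            + fderiv ℝ (fun p : E3 => v p 2) q (eS i) * z q 2)) (0 : E3 →L[ℝ] ℝ) p := by
      rw [hfun]; exact hasFDerivAt_const 0 p
    have hM := hf0.unique hf
    have he := DFunLike.congr_fun hM.symm e
    simp only [ContinuousLinearMap.add_apply, ContinuousLinearMap.smul_apply,
      ContinuousLinearMap.coe_comp', Function.comp_apply, ContinuousLinearMap.apply_apply,
      smul_eq_mul, ContinuousLinearMap.zero_apply] at he
    unfold D2
    linear_combination he
  intro x t
  -- the time slice of w in terms of z
  have hwt : (fun s => w (x, s)) = fun s =>
      ![fderiv ℝ (fun p : E3 => z p 2) (x, s) (eS 1) - fderiv ℝ (fun p : E3 => z p 1) (x, s) (eS 2),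
        fderiv ℝ (fun p : E3 => z p 0) (x, s) (eS 2) - fderiv ℝ (fun p : E3 => z p 2) (x, s) (eS 0),
        fderiv ℝ (fun p : E3 => z p 1) (x, s) (eS 0) - fderiv ℝ (fun p : E3 => z p 0) (x, s) (eS 1)] := by
    funext s
    rw [hw, ← hcurl]
    simp only [curlAt, jac_slice z hz]
  have hD : HasDerivAt (fun s =>
      ![fderiv ℝ (fun p : E3 => z p 2) (x, s) (eS 1) - fderiv ℝ (fun p : E3 => z p 1) (x, s) (eS 2),
        fderiv ℝ (fun p : E3 => z p 0) (x, s) (eS 2) - fderiv ℝ (fun p : E3 => z p 2) (x, s) (eS 0),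
        fderiv ℝ (fun p : E3 => z p 1) (x, s) (eS 0) - fderiv ℝ (fun p : E3 => z p 0) (x, s) (eS 1)])
      ![D2 (fun p : E3 => z p 2) (x, t) eT (eS 1) - D2 (fun p : E3 => z p 1) (x, t) eT (eS 2),
        D2 (fun p : E3 => z p 0) (x, t) eT (eS 2) - D2 (fun p : E3 => z p 2) (x, t) eT (eS 0),
        D2 (fun p : E3 => z p 1) (x, t) eT (eS 0) - D2 (fun p : E3 => z p 0) (x, t) eT (eS 1)] t := by
    rw [hasDerivAt_pi]
    intro k
    fin_cases k
    · simpa using (hasDerivAt_pd_time _ (hzC 2) x t (eS 1)).fun_sub (hasDerivAt_pd_time _ (hzC 1) x t (eS 2))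
    · simpa using (hasDerivAt_pd_time _ (hzC 0) x t (eS 2)).fun_sub (hasDerivAt_pd_time _ (hzC 2) x t (eS 0))
    · simpa using (hasDerivAt_pd_time _ (hzC 1) x t (eS 0)).fun_sub (hasDerivAt_pd_time _ (hzC 0) x t (eS 1))
  have hder : deriv (fun s => w (x, s)) t =
      ![D2 (fun p : E3 => z p 2) (x, t) eT (eS 1) - D2 (fun p : E3 => z p 1) (x, t) eT (eS 2),
        D2 (fun p : E3 => z p 0) (x, t) eT (eS 2) - D2 (fun p : E3 => z p 2) (x, t) eT (eS 0),
        D2 (fun p : E3 => z p 1) (x, t) eT (eS 0) - D2 (fun p : E3 => z p 0) (x, t) eT (eS 1)] := by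
    rw [hwt]; exact hD.deriv
  -- spatial slice of w
  have hwx : (fun y => w (y, t)) = fun y =>
      ![fderiv ℝ (fun p : E3 => z p 2) (y, t) (eS 1) - fderiv ℝ (fun p : E3 => z p 1) (y, t) (eS 2),
        fderiv ℝ (fun p : E3 => z p 0) (y, t) (eS 2) - fderiv ℝ (fun p : E3 => z p 2) (y, t) (eS 0),
        fderiv ℝ (fun p : E3 => z p 1) (y, t) (eS 0) - fderiv ℝ (fun p : E3 => z p 0) (y, t) (eS 1)] := by
    funext y
    rw [hw, ← hcurl]
    simp only [curlAt, jac_slice z hz]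
  have hjw : jacAt (fun y => w (y, t)) x = fun i j =>
      ![D2 (fun p : E3 => z p 2) (x, t) (eS j) (eS 1) - D2 (fun p : E3 => z p 1) (x, t) (eS j) (eS 2),
        D2 (fun p : E3 => z p 0) (x, t) (eS j) (eS 2) - D2 (fun p : E3 => z p 2) (x, t) (eS j) (eS 0),
        D2 (fun p : E3 => z p 1) (x, t) (eS j) (eS 0) - D2 (fun p : E3 => z p 0) (x, t) (eS j) (eS 1)] i := by
    funext i j
    rw [hwx]
    have hdF : ∀ k : Fin 3, DifferentiableAt ℝ (fun y =>
        (![fderiv ℝ (fun p : E3 => z p 2) (y, t) (eS 1) - fderiv ℝ (fun p : E3 => z p 1) (y, t) (eS 2),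
          fderiv ℝ (fun p : E3 => z p 0) (y, t) (eS 2) - fderiv ℝ (fun p : E3 => z p 2) (y, t) (eS 0),
          fderiv ℝ (fun p : E3 => z p 1) (y, t) (eS 0) - fderiv ℝ (fun p : E3 => z p 0) (y, t) (eS 1)] : Fin 3 → ℝ) k) x := by
      intro k
      fin_cases k
      · simpa using ((hasFDerivAt_pd_space _ (hzC 2) x t (eS 1)).fun_sub (hasFDerivAt_pd_space _ (hzC 1) x t (eS 2))).differentiableAt
      · simpa using ((hasFDerivAt_pd_space _ (hzC 0) x t (eS 2)).fun_sub (hasFDerivAt_pd_space _ (hzC 2) x t (eS 0))).differentiableAt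
      · simpa using ((hasFDerivAt_pd_space _ (hzC 1) x t (eS 0)).fun_sub (hasFDerivAt_pd_space _ (hzC 0) x t (eS 1))).differentiableAt
    rw [jac_pi _ _ hdF i j]
    fin_cases i
    · have := ((hasFDerivAt_pd_space _ (hzC 2) x t (eS 1)).fun_sub (hasFDerivAt_pd_space _ (hzC 1) x t (eS 2))).fderiv
      simp only [Fin.zero_eta, Fin.isValue, Matrix.cons_val_zero]
      rw [this]
      simp [D2, eS]
    · have := ((hasFDerivAt_pd_space _ (hzC 0) x t (eS 2)).fun_sub (hasFDerivAt_pd_space _ (hzC 2) x t (eS 0))).fderiv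
      simp only [Fin.mk_one, Fin.isValue, Matrix.cons_val_one, Matrix.head_cons, Matrix.cons_val_zero]
      rw [this]
      simp [D2, eS]
    · have := ((hasFDerivAt_pd_space _ (hzC 1) x t (eS 0)).fun_sub (hasFDerivAt_pd_space _ (hzC 0) x t (eS 1))).fderiv
      simp only [Fin.reduceFinMk, Fin.isValue, Matrix.cons_val_two, Matrix.tail_cons, Matrix.head_cons]
      rw [this]
      simp [D2, eS]
  have hjacv : jacAt (fun y => v (y, t)) x = fun i j => fderiv ℝ (fun p : E3 => v p i) (x, t) (eS j) := by
    funext i j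
    exact jac_slice v hv x t i j
  have hwval : w (x, t) =
      ![fderiv ℝ (fun p : E3 => v p 2) (x, t) (eS 1) - fderiv ℝ (fun p : E3 => v p 1) (x, t) (eS 2),
        fderiv ℝ (fun p : E3 => v p 0) (x, t) (eS 2) - fderiv ℝ (fun p : E3 => v p 2) (x, t) (eS 0),
        fderiv ℝ (fun p : E3 => v p 1) (x, t) (eS 0) - fderiv ℝ (fun p : E3 => v p 0) (x, t) (eS 1)] := by
    rw [hw]
    simp only [curlAt, jac_slice v hv]
  have hc0 : fderiv ℝ (fun p : E3 => z p 2) (x, t) (eS 1) - fderiv ℝ (fun p : E3 => z p 1) (x, t) (eS 2)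
      = fderiv ℝ (fun p : E3 => v p 2) (x, t) (eS 1) - fderiv ℝ (fun p : E3 => v p 1) (x, t) (eS 2) := by
    simpa [curlAt, jac_slice z hz, jac_slice v hv] using congrFun (hcurl x t) 0
  have hc1 : fderiv ℝ (fun p : E3 => z p 0) (x, t) (eS 2) - fderiv ℝ (fun p : E3 => z p 2) (x, t) (eS 0)
      = fderiv ℝ (fun p : E3 => v p 0) (x, t) (eS 2) - fderiv ℝ (fun p : E3 => v p 2) (x, t) (eS 0) := by
    simpa [curlAt, jac_slice z hz, jac_slice v hv] using congrFun (hcurl x t) 1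
  have hc2 : fderiv ℝ (fun p : E3 => z p 1) (x, t) (eS 0) - fderiv ℝ (fun p : E3 => z p 0) (x, t) (eS 1)
      = fderiv ℝ (fun p : E3 => v p 1) (x, t) (eS 0) - fderiv ℝ (fun p : E3 => v p 0) (x, t) (eS 1) := by
    simpa [curlAt, jac_slice z hz, jac_slice v hv] using congrFun (hcurl x t) 2
  have hdd : fderiv ℝ (fun p : E3 => v p 0) (x, t) (eS 0) + fderiv ℝ (fun p : E3 => v p 1) (x, t) (eS 1)
      + fderiv ℝ (fun p : E3 => v p 2) (x, t) (eS 2) = 0 := by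
    have h := hdiv x t
    simp only [divAt, Fin.sum_univ_three, jac_slice v hv] at h
    linarith [h]
  rw [hder, hjw, hjacv, hwval]
  funext k
  fin_cases k
  · simp only [Pi.add_apply, Pi.sub_apply, Pi.zero_apply, Matrix.mulVec, dotProduct,
      Fin.sum_univ_three, Fin.zero_eta, Fin.mk_one, Fin.reduceFinMk, Fin.isValue,
      Matrix.cons_val_zero, Matrix.cons_val_one, Matrix.head_cons,
      Matrix.cons_val_two, Matrix.tail_cons]
    linear_combination (hG 2 (x, t) (eS 1)) - (hG 1 (x, t) (eS 2))
      + D2_symm _ (hzC 2) (x, t) eT (eS 1) - D2_symm _ (hzC 1) (x, t) eT (eS 2)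
      + v (x, t) 0 * D2_symm _ (hzC 2) (x, t) (eS 0) (eS 1)
      + v (x, t) 1 * D2_symm _ (hzC 2) (x, t) (eS 1) (eS 1)
      + v (x, t) 2 * D2_symm _ (hzC 2) (x, t) (eS 2) (eS 1)
      - v (x, t) 0 * D2_symm _ (hzC 1) (x, t) (eS 0) (eS 2)
      - v (x, t) 1 * D2_symm _ (hzC 1) (x, t) (eS 1) (eS 2)
      - v (x, t) 2 * D2_symm _ (hzC 1) (x, t) (eS 2) (eS 2)
      - z (x, t) 0 * D2_symm _ (hvC 0) (x, t) (eS 1) (eS 2)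
      - z (x, t) 1 * D2_symm _ (hvC 1) (x, t) (eS 1) (eS 2)
      - z (x, t) 2 * D2_symm _ (hvC 2) (x, t) (eS 1) (eS 2)
      + (-(fderiv ℝ (fun p : E3 => v p 1) (x, t) (eS 1)) - fderiv ℝ (fun p : E3 => v p 2) (x, t) (eS 2)) * hc0
      + fderiv ℝ (fun p : E3 => v p 0) (x, t) (eS 1) * hc1
      + fderiv ℝ (fun p : E3 => v p 0) (x, t) (eS 2) * hc2
      + (fderiv ℝ (fun p : E3 => v p 1) (x, t) (eS 2) - fderiv ℝ (fun p : E3 => v p 2) (x, t) (eS 1)) * hdd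
  · simp only [Pi.add_apply, Pi.sub_apply, Pi.zero_apply, Matrix.mulVec, dotProduct,
      Fin.sum_univ_three, Fin.zero_eta, Fin.mk_one, Fin.reduceFinMk, Fin.isValue,
      Matrix.cons_val_zero, Matrix.cons_val_one, Matrix.head_cons,
      Matrix.cons_val_two, Matrix.tail_cons]
    linear_combination (hG 0 (x, t) (eS 2)) - (hG 2 (x, t) (eS 0))
      + D2_symm _ (hzC 0) (x, t) eT (eS 2) - D2_symm _ (hzC 2) (x, t) eT (eS 0)
      + v (x, t) 0 * D2_symm _ (hzC 0) (x, t) (eS 0) (eS 2)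
      + v (x, t) 1 * D2_symm _ (hzC 0) (x, t) (eS 1) (eS 2)
      + v (x, t) 2 * D2_symm _ (hzC 0) (x, t) (eS 2) (eS 2)
      - v (x, t) 0 * D2_symm _ (hzC 2) (x, t) (eS 0) (eS 0)
      - v (x, t) 1 * D2_symm _ (hzC 2) (x, t) (eS 1) (eS 0)
      - v (x, t) 2 * D2_symm _ (hzC 2) (x, t) (eS 2) (eS 0)
      - z (x, t) 0 * D2_symm _ (hvC 0) (x, t) (eS 2) (eS 0)
      - z (x, t) 1 * D2_symm _ (hvC 1) (x, t) (eS 2) (eS 0)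
      - z (x, t) 2 * D2_symm _ (hvC 2) (x, t) (eS 2) (eS 0)
      + fderiv ℝ (fun p : E3 => v p 1) (x, t) (eS 0) * hc0
      + (-(fderiv ℝ (fun p : E3 => v p 0) (x, t) (eS 0)) - fderiv ℝ (fun p : E3 => v p 2) (x, t) (eS 2)) * hc1
      + fderiv ℝ (fun p : E3 => v p 1) (x, t) (eS 2) * hc2
      + (-(fderiv ℝ (fun p : E3 => v p 0) (x, t) (eS 2)) + fderiv ℝ (fun p : E3 => v p 2) (x, t) (eS 0)) * hdd
  · simp only [Pi.add_apply, Pi.sub_apply, Pi.zero_apply, Matrix.mulVec, dotProduct,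
      Fin.sum_univ_three, Fin.zero_eta, Fin.mk_one, Fin.reduceFinMk, Fin.isValue,
      Matrix.cons_val_zero, Matrix.cons_val_one, Matrix.head_cons,
      Matrix.cons_val_two, Matrix.tail_cons]
    linear_combination (hG 1 (x, t) (eS 0)) - (hG 0 (x, t) (eS 1))
      + D2_symm _ (hzC 1) (x, t) eT (eS 0) - D2_symm _ (hzC 0) (x, t) eT (eS 1)
      + v (x, t) 0 * D2_symm _ (hzC 1) (x, t) (eS 0) (eS 0)
      + v (x, t) 1 * D2_symm _ (hzC 1) (x, t) (eS 1) (eS 0)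
      + v (x, t) 2 * D2_symm _ (hzC 1) (x, t) (eS 2) (eS 0)
      - v (x, t) 0 * D2_symm _ (hzC 0) (x, t) (eS 0) (eS 1)
      - v (x, t) 1 * D2_symm _ (hzC 0) (x, t) (eS 1) (eS 1)
      - v (x, t) 2 * D2_symm _ (hzC 0) (x, t) (eS 2) (eS 1)
      - z (x, t) 0 * D2_symm _ (hvC 0) (x, t) (eS 0) (eS 1)
      - z (x, t) 1 * D2_symm _ (hvC 1) (x, t) (eS 0) (eS 1)
      - z (x, t) 2 * D2_symm _ (hvC 2) (x, t) (eS 0) (eS 1)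
      + fderiv ℝ (fun p : E3 => v p 2) (x, t) (eS 0) * hc0
      + fderiv ℝ (fun p : E3 => v p 2) (x, t) (eS 1) * hc1
      + (-(fderiv ℝ (fun p : E3 => v p 0) (x, t) (eS 0)) - fderiv ℝ (fun p : E3 => v p 1) (x, t) (eS 1)) * hc2
      + (fderiv ℝ (fun p : E3 => v p 0) (x, t) (eS 1) - fderiv ℝ (fun p : E3 => v p 1) (x, t) (eS 0)) * hdd
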